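/- Fix n and a partition n = a_0 + a_1 + ... + a_h with a_0 = 1 and all a_N ≥ 1, and set L_N = [a_0+...+a_{N-1}+1, a_0+...+a_N]. The number of graphs G on vertex set [n] that are connected, closed with respect to the identity labeling, and have L_N as their N-th layer (set of vertices at distance N from 1) for all N, equals ∏_{N=0}^{h-1} C(a_{N+1} + a_N - 1, a_N - 1). -/

import Mathlib

def IsClosedLabeling {n : ℕ} (G : SimpleGraph (Fin n)) : Prop :=
  ∀ u v w : Fin n, G.Adj v u → G.Adj v w → u ≠ w →
    ((v < u ∧ v < w) ∨ (u < v ∧ w < v)) → G.Adj u w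

namespace CCG


lemma sm_le_apply {p m : ℕ} {g : Fin p → Fin m} (hg : StrictMono g) :
    ∀ k (hk : k < p), k ≤ (g ⟨k, hk⟩ : ℕ) := by
  intro k
  induction k with
  | zero => intro _; exact Nat.zero_le _
  | succ k ih =>
    intro hk
    have h1 : (g ⟨k, by omega⟩ : ℕ) < g ⟨k+1, hk⟩ := hg (by simp [Fin.lt_def])
    have := ih (by omega)
    omega

lemma sm_apply_le {p m : ℕ} {g : Fin p → Fin m} (hg : StrictMono g) (i : Fin p) :
    (g i : ℕ) ≤ m - p + i := by
  have hrev : StrictMono (fun j : Fin p => (g j.rev).rev) := by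
    intro i j hij
    exact Fin.rev_lt_rev.mpr (hg (Fin.rev_lt_rev.mpr hij))
  have hle := sm_le_apply hrev (i.rev : ℕ) i.rev.isLt
  have hieq : (⟨(i.rev : ℕ), i.rev.isLt⟩ : Fin p) = i.rev := rfl
  rw [hieq] at hle
  simp only [Fin.rev_rev, Fin.val_rev] at hle
  have hi := i.isLt
  have hgi := (g i).isLt
  omega

lemma sm_add_le {p m : ℕ} {g : Fin p → Fin m} (hg : StrictMono g) (i j : Fin p) (hij : i ≤ j) :
    (g i : ℕ) + ((j : ℕ) - i) ≤ g j := by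
  obtain ⟨d, hd⟩ : ∃ d, (j : ℕ) = i + d := ⟨(j:ℕ) - i, by omega⟩
  induction d generalizing j with
  | zero => have : i = j := Fin.ext (by omega); subst this; omega
  | succ d ih =>
    have hd' : (i : ℕ) + d < p := by have := j.isLt; omega
    have h1 := ih ⟨(i:ℕ) + d, hd'⟩ (by simp [Fin.le_def]) (by simp)
    have h2 : g ⟨(i:ℕ)+d, hd'⟩ < g j := hg (by rw [Fin.lt_def]; simp; omega)
    rw [Fin.lt_def] at h2
    simp only [Fin.val_mk] at h1 h2
    omega


noncomputable def smEquivFinset (p m : ℕ) :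
    {g : Fin p → Fin m // StrictMono g} ≃ {s : Finset (Fin m) // s.card = p} where
  toFun g := ⟨Finset.univ.image g.1, by
    rw [Finset.card_image_of_injective _ g.2.injective, Finset.card_univ, Fintype.card_fin]⟩
  invFun s := ⟨s.1.orderEmbOfFin s.2, (s.1.orderEmbOfFin s.2).strictMono⟩
  left_inv g := by
    apply Subtype.ext
    exact (Finset.orderEmbOfFin_unique _ (fun x => Finset.mem_image_of_mem _ (Finset.mem_univ x))
      g.2).symm
  right_inv s := by
    apply Subtype.ext
    ext x
    simp only [Finset.mem_image, Finset.mem_univ, true_and]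
    constructor
    · rintro ⟨i, rfl⟩; exact Finset.orderEmbOfFin_mem _ _ _
    · intro hx
      have : x ∈ Set.range (s.1.orderEmbOfFin s.2) := by
        rw [Finset.range_orderEmbOfFin]; exact hx
      obtain ⟨i, hi⟩ := this
      exact ⟨i, hi⟩

noncomputable def monoEquivSM (p q : ℕ) (hq : 1 ≤ q) :
    {f : Fin p → Fin q // Monotone f} ≃ {g : Fin p → Fin (q - 1 + p) // StrictMono g} where
  toFun f := ⟨fun i => ⟨f.1 i + i, by have := (f.1 i).isLt; have := i.isLt; omega⟩, by
    intro i j hij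
    have h1 : f.1 i ≤ f.1 j := f.2 hij.le
    rw [Fin.lt_def] at hij ⊢
    simp only [Fin.val_mk]
    rw [Fin.le_def] at h1
    omega⟩
  invFun g := ⟨fun i => ⟨g.1 i - i, by
      have := sm_apply_le g.2 i
      have hi := i.isLt
      omega⟩, by
    intro i j hij
    rw [Fin.le_def] at hij ⊢
    simp only [Fin.val_mk]
    have := sm_add_le g.2 i j hij
    omega⟩
  left_inv f := by
    apply Subtype.ext
    funext i
    apply Fin.ext
    simp
  right_inv g := by
    apply Subtype.ext
    funext i
    apply Fin.ext
    simp only [Fin.val_mk]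
    have := sm_le_apply g.2 i i.isLt
    have : (i : ℕ) ≤ g.1 i := by simpa using this
    omega

lemma card_monotone_maps (p q : ℕ) (hq : 1 ≤ q) :
    Nat.card {f : Fin p → Fin q // Monotone f} = (p + q - 1).choose (q - 1) := by
  rw [Nat.card_congr ((monoEquivSM p q hq).trans (smEquivFinset p (q - 1 + p))),
    Nat.card_eq_fintype_card, Fintype.card_finset_len, Fintype.card_fin]
  have h1 : q - 1 + p = p + q - 1 := by omega
  rw [h1, ← Nat.choose_symm (by omega : p ≤ p + q - 1)]
  congr 1
  omega


def csum (a : ℕ → ℕ) (N : ℕ) : ℕ := ∑ M ∈ Finset.range N, a M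

def ell (h : ℕ) (a : ℕ → ℕ) (v : ℕ) : ℕ := Nat.findGreatest (fun N => csum a N ≤ v) h

variable {n h : ℕ} {a : ℕ → ℕ}

lemma csum_succ (a : ℕ → ℕ) (N : ℕ) : csum a (N + 1) = csum a N + a N :=
  Finset.sum_range_succ a N

lemma csum_mono (a : ℕ → ℕ) : Monotone (csum a) := fun _ _ hMN =>
  Finset.sum_le_sum_of_subset (Finset.range_subset_range.mpr hMN)

lemma csum_lt (hpos : ∀ N ≤ h, 1 ≤ a N) {N : ℕ} (hN : N ≤ h) :
    csum a N < csum a (N + 1) := by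
  rw [csum_succ]; have := hpos N hN; omega

lemma ell_le (v : ℕ) : ell h a v ≤ h := Nat.findGreatest_le h

lemma csum_ell_le (v : ℕ) : csum a (ell h a v) ≤ v := by
  exact Nat.findGreatest_spec (P := fun N => csum a N ≤ v) (Nat.zero_le h) (by simp [csum])

lemma lt_csum_ell (hsum : csum a (h + 1) = n) (hv : v < n) :
    v < csum a (ell h a v + 1) := by
  rcases Nat.lt_or_ge (ell h a v) h with hlt | hge
  · by_contra hc
    have h2 : csum a (ell h a v + 1) ≤ v := by omega
    have heq : Nat.findGreatest (fun N => csum a N ≤ v) h = ell h a v := rfl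
    exact Nat.findGreatest_is_greatest (P := fun N => csum a N ≤ v) (n := h) (k := ell h a v + 1)
      (by omega) (by omega) h2
  · have : ell h a v = h := le_antisymm (ell_le v) hge
    rw [this, hsum]; exact hv

lemma ell_eq_iff (hpos : ∀ N ≤ h, 1 ≤ a N) (hsum : csum a (h + 1) = n)
    {N v : ℕ} (hN : N ≤ h) (hv : v < n) :
    ell h a v = N ↔ (csum a N ≤ v ∧ v < csum a (N + 1)) := by
  constructor
  · rintro rfl; exact ⟨csum_ell_le v, lt_csum_ell hsum hv⟩
  · rintro ⟨h1, h2⟩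
    have hge : N ≤ ell h a v := Nat.le_findGreatest hN h1
    have hle : ell h a v ≤ N := by
      by_contra hc
      have : csum a (N + 1) ≤ csum a (ell h a v) := csum_mono a (by omega)
      have := csum_ell_le (a := a) (h := h) v
      omega
    omega

lemma ell_mono {u v : ℕ} (huv : u ≤ v) : ell h a u ≤ ell h a v :=
  Nat.le_findGreatest (ell_le u) (le_trans (csum_ell_le u) huv)

lemma ell_zero_iff (ha0 : a 0 = 1) (hpos : ∀ N ≤ h, 1 ≤ a N) (hsum : csum a (h + 1) = n)
    (hv : v < n) : ell h a v = 0 ↔ v = 0 := by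
  rw [ell_eq_iff hpos hsum (Nat.zero_le h) hv]
  have h1 : csum a 1 = 1 := by rw [csum_succ]; simp [csum, ha0]
  simp [csum, h1]
  omega

/-- the graph associated to a parameter function `m`. -/
def layerGraph (h : ℕ) (a : ℕ → ℕ) (m : Fin n → Fin n) : SimpleGraph (Fin n) where
  Adj u v := u ≠ v ∧ (ell h a u = ell h a v ∨
      (ell h a (u : ℕ) + 1 = ell h a (v : ℕ) ∧ (m v : ℕ) ≤ (u : ℕ)) ∨
      (ell h a (v : ℕ) + 1 = ell h a (u : ℕ) ∧ (m u : ℕ) ≤ (v : ℕ)))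
  symm := ⟨by intro u v ⟨h1, h2⟩; exact ⟨h1.symm, by tauto⟩⟩
  loopless := ⟨fun v hv => hv.1 rfl⟩

/-- the conditions on `m` making `layerGraph` one of the counted graphs -/
def GoodM (n h : ℕ) (a : ℕ → ℕ) (m : Fin n → Fin n) : Prop :=
  (∀ v : Fin n, ell h a (v : ℕ) = 0 → m v = v) ∧
  (∀ v : Fin n, 1 ≤ ell h a (v : ℕ) →
      csum a (ell h a (v : ℕ) - 1) ≤ (m v : ℕ) ∧ (m v : ℕ) < csum a (ell h a (v : ℕ))) ∧
  (∀ u v : Fin n, (u : ℕ) ≤ (v : ℕ) → ell h a (u : ℕ) = ell h a (v : ℕ) →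
      (m u : ℕ) ≤ (m v : ℕ))

section Backward

variable (hn : 0 < n) (ha0 : a 0 = 1) (hpos : ∀ N ≤ h, 1 ≤ a N) (hsum : csum a (h + 1) = n)
  {m : Fin n → Fin n}

include hn ha0 hpos hsum

lemma exists_walk_layer (hgood : GoodM n h a m) :
    ∀ L (v : Fin n), ell h a (v : ℕ) = L →
      ∃ p : (layerGraph h a m).Walk ⟨0, hn⟩ v, p.length = L := by
  intro L
  induction L with
  | zero =>
    intro v hv
    have hv0 : (v : ℕ) = 0 := (ell_zero_iff ha0 hpos hsum v.isLt).mp hv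
    have : v = ⟨0, hn⟩ := Fin.ext hv0
    subst this
    exact ⟨SimpleGraph.Walk.nil, rfl⟩
  | succ L ih =>
    intro v hv
    have hLh : L + 1 ≤ h := hv ▸ ell_le (a := a) (v : ℕ)
    have hcle : csum a (L + 1) ≤ (v : ℕ) := hv ▸ csum_ell_le (a := a) (h := h) (v : ℕ)
    have hlt : csum a L < csum a (L + 1) := csum_lt hpos (by omega)
    have hun : csum a (L + 1) - 1 < n := by have := v.isLt; omega
    set u : Fin n := ⟨csum a (L + 1) - 1, hun⟩ with hu_def
    have hu_val : (u : ℕ) = csum a (L + 1) - 1 := rfl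
    have heu : ell h a (u : ℕ) = L := by
      rw [ell_eq_iff hpos hsum (by omega) hun]
      constructor <;> omega
    have hmv := hgood.2.1 v (by omega)
    rw [hv] at hmv
    simp only [Nat.add_sub_cancel] at hmv
    have hadj : (layerGraph h a m).Adj u v := by
      refine ⟨?_, Or.inr (Or.inl ⟨by omega, by omega⟩)⟩
      intro hc
      have : (u : ℕ) = (v : ℕ) := by rw [hc]
      omega
    obtain ⟨p, hp⟩ := ih u heu
    exact ⟨p.concat hadj, by rw [SimpleGraph.Walk.length_concat, hp]⟩

omit hn ha0 hpos hsum in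
lemma walk_length_ge (u v : Fin n) (p : (layerGraph h a m).Walk u v) :
    ell h a (v : ℕ) ≤ ell h a (u : ℕ) + p.length := by
  induction p with
  | nil => simp
  | cons hadj p ih =>
    obtain ⟨_, hc⟩ := id hadj
    rw [SimpleGraph.Walk.length_cons]
    rcases hc with h1 | ⟨h1, _⟩ | ⟨h1, _⟩ <;> omega

lemma layerGraph_dist (hgood : GoodM n h a m) (v : Fin n) :
    (layerGraph h a m).dist ⟨0, hn⟩ v = ell h a (v : ℕ) := by
  obtain ⟨p, hp⟩ := exists_walk_layer hn ha0 hpos hsum hgood (ell h a (v : ℕ)) v rfl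
  have hub := SimpleGraph.dist_le p
  rw [hp] at hub
  obtain ⟨q, hq⟩ := p.reachable.exists_walk_length_eq_dist
  have hlb := walk_length_ge (u := ⟨0, hn⟩) (v := v) q
  have h0 : ell h a ((⟨0, hn⟩ : Fin n) : ℕ) = 0 :=
    (ell_zero_iff ha0 hpos hsum hn).mpr rfl
  omega

lemma layerGraph_connected (hgood : GoodM n h a m) : (layerGraph h a m).Connected := by
  rw [SimpleGraph.connected_iff]
  refine ⟨fun x y => ?_, ⟨⟨0, hn⟩⟩⟩
  obtain ⟨p, _⟩ := exists_walk_layer hn ha0 hpos hsum hgood (ell h a (x : ℕ)) x rfl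
  obtain ⟨q, _⟩ := exists_walk_layer hn ha0 hpos hsum hgood (ell h a (y : ℕ)) y rfl
  exact p.reachable.symm.trans q.reachable

lemma layerGraph_closed (hgood : GoodM n h a m) : IsClosedLabeling (layerGraph h a m) := by
  intro u v w hu hw hne hcase
  obtain ⟨ne1, c1⟩ := hu
  obtain ⟨ne2, c2⟩ := hw
  refine ⟨hne, ?_⟩
  rw [Fin.lt_def, Fin.lt_def] at hcase
  rcases hcase with ⟨h1, h2⟩ | ⟨h1, h2⟩
  · -- v < u and v < w
    have e1 : ell h a (v : ℕ) ≤ ell h a (u : ℕ) := ell_mono (by omega)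
    have e2 : ell h a (v : ℕ) ≤ ell h a (w : ℕ) := ell_mono (by omega)
    rcases c1 with d1 | ⟨d1, d1'⟩ | ⟨d1, _⟩ <;> rcases c2 with d2 | ⟨d2, d2'⟩ | ⟨d2, _⟩ <;>
      first
        | (exact Or.inl (by omega))
        | (exact Or.inr (Or.inl ⟨by omega, by omega⟩))
        | (exact Or.inr (Or.inr ⟨by omega, by omega⟩))
        | omega
  · -- u < v and w < v
    have e1 : ell h a (u : ℕ) ≤ ell h a (v : ℕ) := ell_mono (by omega)
    have e2 : ell h a (w : ℕ) ≤ ell h a (v : ℕ) := ell_mono (by omega)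
    rcases c1 with d1 | ⟨d1, _⟩ | ⟨d1, d1'⟩ <;> rcases c2 with d2 | ⟨d2, _⟩ | ⟨d2, d2'⟩
    · exact Or.inl (by omega)
    · omega
    · -- ell w + 1 = ell v, m v ≤ w ; ell u = ell v
      have hmu : (m u : ℕ) ≤ (m v : ℕ) := hgood.2.2 u v (by omega) (by omega)
      exact Or.inr (Or.inr ⟨by omega, by omega⟩)
    · omega
    · omega
    · omega
    · -- ell u + 1 = ell v, m v ≤ u ; ell w = ell v
      have hmw : (m w : ℕ) ≤ (m v : ℕ) := hgood.2.2 w v (by omega) (by omega)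
      exact Or.inr (Or.inl ⟨by omega, by omega⟩)
    · omega
    · exact Or.inl (by omega)

end Backward

section Forward

variable (hn : 0 < n) (ha0 : a 0 = 1) (hpos : ∀ N ≤ h, 1 ≤ a N) (hsum : csum a (h + 1) = n)
  {G : SimpleGraph (Fin n)} (hconn : G.Connected) (hclosed : IsClosedLabeling G)
  (hdist : ∀ v : Fin n, G.dist ⟨0, hn⟩ v = ell h a (v : ℕ))

include hn hconn hdist

lemma adj_ell_le {x y : Fin n} (hadj : G.Adj x y) :
    ell h a (y : ℕ) ≤ ell h a (x : ℕ) + 1 := by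
  rw [← hdist x, ← hdist y]
  have h1 := hconn.dist_triangle (u := ⟨0, hn⟩) (v := x) (w := y)
  rw [SimpleGraph.dist_eq_one_iff_adj.mpr hadj] at h1
  exact h1

include ha0 hpos hsum

lemma exists_parent (v : Fin n) (hv : 1 ≤ ell h a (v : ℕ)) :
    ∃ u : Fin n, G.Adj u v ∧ ell h a (u : ℕ) = ell h a (v : ℕ) - 1 := by
  obtain ⟨p, hp⟩ := (hconn.preconnected ⟨0, hn⟩ v).exists_walk_length_eq_dist
  rw [hdist v] at hp
  cases hq : p.reverse with
  | nil =>
    exfalso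
    have : p.length = 0 := by
      have := congrArg SimpleGraph.Walk.length hq
      rwa [SimpleGraph.Walk.length_reverse] at this
    have h0 : ell h a ((⟨0, hn⟩ : Fin n) : ℕ) = 0 := (ell_zero_iff ha0 hpos hsum hn).mpr rfl
    omega
  | cons hadj q =>
    rename_i u
    have hlen : q.length + 1 = ell h a (v : ℕ) := by
      have := congrArg SimpleGraph.Walk.length hq
      rw [SimpleGraph.Walk.length_reverse, SimpleGraph.Walk.length_cons] at this
      omega
    have hdle : G.dist ⟨0, hn⟩ u ≤ q.length := by
      have := SimpleGraph.dist_le q.reverse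
      rwa [SimpleGraph.Walk.length_reverse] at this
    rw [hdist u] at hdle
    have h1 : ell h a (v : ℕ) ≤ ell h a (u : ℕ) + 1 := adj_ell_le hn hconn hdist hadj.symm
    exact ⟨u, hadj.symm, by omega⟩

lemma same_layer_adj (hclosed : IsClosedLabeling G) :
    ∀ L (u w : Fin n), ell h a (u : ℕ) = L → ell h a (w : ℕ) = L → u ≠ w → G.Adj u w := by
  intro L
  induction L with
  | zero =>
    intro u w hu hw hne
    exact absurd (Fin.ext (((ell_zero_iff ha0 hpos hsum u.isLt).mp hu).trans
      (((ell_zero_iff ha0 hpos hsum w.isLt).mp hw).symm))) hne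
  | succ L ih =>
    intro u w hu hw hne
    obtain ⟨p, hpw, hpl⟩ := exists_parent hn ha0 hpos hsum hconn hdist w (by omega)
    obtain ⟨r, hru, hrl⟩ := exists_parent hn ha0 hpos hsum hconn hdist u (by omega)
    rw [hw] at hpl
    rw [hu] at hrl
    simp only [Nat.add_sub_cancel] at hpl hrl
    -- value comparisons
    have hpu : (p : ℕ) < (u : ℕ) := by
      have h1 := lt_csum_ell (a := a) (h := h) hsum p.isLt
      have h2 := csum_ell_le (a := a) (h := h) (u : ℕ)
      rw [hpl] at h1; rw [hu] at h2; omega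
    have hpw' : (p : ℕ) < (w : ℕ) := by
      have h1 := lt_csum_ell (a := a) (h := h) hsum p.isLt
      have h2 := csum_ell_le (a := a) (h := h) (w : ℕ)
      rw [hpl] at h1; rw [hw] at h2; omega
    have hru' : (r : ℕ) < (u : ℕ) := by
      have h1 := lt_csum_ell (a := a) (h := h) hsum r.isLt
      have h2 := csum_ell_le (a := a) (h := h) (u : ℕ)
      rw [hrl] at h1; rw [hu] at h2; omega
    have hrw' : (r : ℕ) < (w : ℕ) := by
      have h1 := lt_csum_ell (a := a) (h := h) hsum r.isLt
      have h2 := csum_ell_le (a := a) (h := h) (w : ℕ)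
      rw [hrl] at h1; rw [hw] at h2; omega
    rcases lt_trichotomy p r with hpr | hpr | hpr
    · have hadjpr : G.Adj p r := ih p r hpl hrl (by intro hc; rw [hc] at hpr; exact lt_irrefl _ hpr)
      have hrw2 : G.Adj r w := hclosed r p w hadjpr hpw
        (by intro hc; rw [hc] at hrl; omega)
        (Or.inl ⟨hpr, by rw [Fin.lt_def]; exact hpw'⟩)
      exact hclosed u r w hru hrw2 hne
        (Or.inl ⟨by rw [Fin.lt_def]; exact hru', by rw [Fin.lt_def]; exact hrw'⟩)
    · subst hpr
      exact hclosed u p w hru hpw hne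
        (Or.inl ⟨by rw [Fin.lt_def]; exact hru', by rw [Fin.lt_def]; exact hpw'⟩)
    · have hadjrp : G.Adj r p := ih r p hrl hpl (by intro hc; rw [hc] at hpr; exact lt_irrefl _ hpr)
      have hpu2 : G.Adj p u := hclosed p r u hadjrp hru
        (by intro hc; rw [hc] at hpl; omega)
        (Or.inl ⟨hpr, by rw [Fin.lt_def]; exact hru'⟩)
      exact hclosed u p w hpu2 hpw hne
        (Or.inl ⟨by rw [Fin.lt_def]; exact hpu, by rw [Fin.lt_def]; exact hpw'⟩)

lemma upper_adj (hclosed : IsClosedLabeling G) {u v q : Fin n} (hadj : G.Adj u v)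
    (hlv : ell h a (v : ℕ) = ell h a (u : ℕ) + 1) (hq : ell h a (q : ℕ) = ell h a (u : ℕ))
    (hle : (u : ℕ) ≤ (q : ℕ)) : G.Adj q v := by
  rcases eq_or_lt_of_le hle with heq | hlt
  · have : u = q := Fin.ext heq
    exact this ▸ hadj
  · have haduq : G.Adj u q := same_layer_adj hn ha0 hpos hsum hconn hdist hclosed
      (ell h a (u : ℕ)) u q rfl hq (by intro hc; rw [hc] at hlt; exact lt_irrefl _ hlt)
    have huv : (u : ℕ) < (v : ℕ) := by
      have h1 := lt_csum_ell (a := a) (h := h) hsum u.isLt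
      have h2 := csum_ell_le (a := a) (h := h) (v : ℕ)
      have h3 : csum a (ell h a (u : ℕ) + 1) ≤ csum a (ell h a (v : ℕ)) :=
        csum_mono a (by omega)
      omega
    exact hclosed q u v haduq hadj (by intro hc; rw [hc] at hq; omega)
      (Or.inl ⟨by rw [Fin.lt_def]; exact hlt, by rw [Fin.lt_def]; exact huv⟩)

lemma forward_exists (hclosed : IsClosedLabeling G) :
    ∃ m : Fin n → Fin n, GoodM n h a m ∧ layerGraph h a m = G := by
  classical
  set S : Fin n → Finset (Fin n) :=
    fun v => Finset.univ.filter (fun u => G.Adj u v ∧ ell h a (u : ℕ) = ell h a (v : ℕ) - 1)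
    with hS_def
  have hSne : ∀ v : Fin n, 1 ≤ ell h a (v : ℕ) → (S v).Nonempty := by
    intro v hv
    obtain ⟨u, h1, h2⟩ := exists_parent hn ha0 hpos hsum hconn hdist v hv
    exact ⟨u, by simp [hS_def, h1, h2]⟩
  set m : Fin n → Fin n := fun v =>
    if hv : 1 ≤ ell h a (v : ℕ) then (S v).min' (hSne v hv) else v with hm_def
  have hmem : ∀ v : Fin n, 1 ≤ ell h a (v : ℕ) →
      G.Adj (m v) v ∧ ell h a ((m v : Fin n) : ℕ) = ell h a (v : ℕ) - 1 := by
    intro v hv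
    have : m v ∈ S v := by rw [hm_def]; simp only [dif_pos hv]; exact (S v).min'_mem _
    simpa [hS_def] using this
  have hmin : ∀ v u : Fin n, 1 ≤ ell h a (v : ℕ) → G.Adj u v →
      ell h a (u : ℕ) = ell h a (v : ℕ) - 1 → (m v : ℕ) ≤ (u : ℕ) := by
    intro v u hv hadj hu
    have : m v ≤ u := by
      rw [hm_def]; simp only [dif_pos hv]
      exact (S v).min'_le u (by simp [hS_def, hadj, hu])
    exact this
  have hm0 : ∀ v : Fin n, ell h a (v : ℕ) = 0 → m v = v := by
    intro v hv
    rw [hm_def]; simp [hv]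
  refine ⟨m, ⟨hm0, ?_, ?_⟩, ?_⟩
  · intro v hv
    obtain ⟨h1, h2⟩ := hmem v hv
    have h3 := csum_ell_le (a := a) (h := h) ((m v : Fin n) : ℕ)
    have h4 := lt_csum_ell (a := a) (h := h) hsum (m v).isLt
    rw [h2] at h3 h4
    have h5 : ell h a (v : ℕ) - 1 + 1 = ell h a (v : ℕ) := by omega
    rw [h5] at h4
    exact ⟨h3, h4⟩
  · intro u v huv hell
    rcases eq_or_lt_of_le huv with heq | hlt
    · have : u = v := Fin.ext heq
      rw [this]
    rcases Nat.eq_zero_or_pos (ell h a (v : ℕ)) with h0 | h0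
    · rw [hm0 u (by omega), hm0 v h0]; exact huv
    · obtain ⟨h1, h2⟩ := hmem v h0
      -- u is adjacent to m v
      have hadjuv : G.Adj v u := (same_layer_adj hn ha0 hpos hsum hconn hdist hclosed
        (ell h a (v : ℕ)) u v (by omega) rfl (by intro hc; rw [hc] at hlt; exact lt_irrefl _ hlt)).symm
      have hmvv : ((m v : Fin n) : ℕ) < (v : ℕ) := by
        have h3 := lt_csum_ell (a := a) (h := h) hsum (m v).isLt
        have h4 := csum_ell_le (a := a) (h := h) (v : ℕ)
        rw [h2] at h3
        have h5 : ell h a (v : ℕ) - 1 + 1 = ell h a (v : ℕ) := by omega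
        rw [h5] at h3
        omega
      have hadjumv : G.Adj u (m v) := hclosed u v (m v) hadjuv h1.symm
        (by intro hc; rw [hc] at hell; omega)
        (Or.inr ⟨by rw [Fin.lt_def]; exact hlt, by rw [Fin.lt_def]; exact hmvv⟩)
      exact hmin u (m v) (by omega) hadjumv.symm (by omega)
  · ext u v
    constructor
    · rintro ⟨hne, hc⟩
      rcases hc with hcc | ⟨hcc, hcc'⟩ | ⟨hcc, hcc'⟩
      · exact same_layer_adj hn ha0 hpos hsum hconn hdist hclosed _ u v rfl hcc.symm hne
      · -- ell u + 1 = ell v, m v ≤ u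
        obtain ⟨h1, h2⟩ := hmem v (by omega)
        exact upper_adj hn ha0 hpos hsum hconn hdist hclosed h1 (by omega) (by omega) hcc'
      · obtain ⟨h1, h2⟩ := hmem u (by omega)
        exact (upper_adj hn ha0 hpos hsum hconn hdist hclosed h1 (by omega) (by omega) hcc').symm
    · intro hadj
      have hne := hadj.ne
      have e1 := adj_ell_le hn hconn hdist hadj
      have e2 := adj_ell_le hn hconn hdist hadj.symm
      refine ⟨hne, ?_⟩
      rcases Nat.lt_trichotomy (ell h a (u : ℕ)) (ell h a (v : ℕ)) with ht | ht | ht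
      · exact Or.inr (Or.inl ⟨by omega, hmin v u (by omega) hadj (by omega)⟩)
      · exact Or.inl ht
      · exact Or.inr (Or.inr ⟨by omega, hmin u v (by omega) hadj.symm (by omega)⟩)

end Forward

section Counting

variable {n h : ℕ} {a : ℕ → ℕ}

lemma vert_lt (hsum : csum a (h + 1) = n) (N : Fin h) (j : Fin (a ((N : ℕ) + 1))) :
    csum a ((N : ℕ) + 1) + (j : ℕ) < n := by
  have h1 : csum a ((N : ℕ) + 1 + 1) ≤ csum a (h + 1) := csum_mono a (by have := N.isLt; omega)
  have h2 := csum_succ a ((N : ℕ) + 1)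
  have := j.isLt
  omega

lemma vert_ell (hpos : ∀ N ≤ h, 1 ≤ a N) (hsum : csum a (h + 1) = n)
    (N : Fin h) (j : Fin (a ((N : ℕ) + 1))) :
    ell h a (csum a ((N : ℕ) + 1) + (j : ℕ)) = (N : ℕ) + 1 := by
  rw [ell_eq_iff hpos hsum (by have := N.isLt; omega) (vert_lt hsum N j)]
  have h2 := csum_succ a ((N : ℕ) + 1)
  have := j.isLt
  omega

lemma F_mono_le (F : (N : Fin h) → {f : Fin (a ((N : ℕ) + 1)) → Fin (a (N : ℕ)) // Monotone f})
    {N N' : Fin h} (hNN : N = N') (j : Fin (a ((N : ℕ) + 1))) (j' : Fin (a ((N' : ℕ) + 1)))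
    (hj : (j : ℕ) ≤ (j' : ℕ)) : (((F N).1 j) : ℕ) ≤ (((F N').1 j') : ℕ) := by
  subst hNN
  exact Fin.le_def.mp ((F N).2 (Fin.le_def.mpr hj))

lemma F_congr (F : (N : Fin h) → {f : Fin (a ((N : ℕ) + 1)) → Fin (a (N : ℕ)) // Monotone f})
    {N N' : Fin h} (hNN : N = N') (j : Fin (a ((N : ℕ) + 1))) (j' : Fin (a ((N' : ℕ) + 1)))
    (hj : (j : ℕ) = (j' : ℕ)) : (((F N).1 j) : ℕ) = (((F N').1 j') : ℕ) :=
  le_antisymm (F_mono_le F hNN j j' hj.le) (F_mono_le F hNN.symm j' j hj.ge)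

/-- from a good `m`, the tuple of monotone maps -/
noncomputable def goodToPi (hpos : ∀ N ≤ h, 1 ≤ a N) (hsum : csum a (h + 1) = n)
    (m : Fin n → Fin n) (hm : GoodM n h a m) :
    (N : Fin h) → {f : Fin (a ((N : ℕ) + 1)) → Fin (a (N : ℕ)) // Monotone f} :=
  fun N => ⟨fun j =>
    ⟨(m ⟨csum a ((N : ℕ) + 1) + (j : ℕ), vert_lt hsum N j⟩ : ℕ) - csum a (N : ℕ), by
      have he := vert_ell hpos hsum N j
      have hb := hm.2.1 ⟨csum a ((N : ℕ) + 1) + (j : ℕ), vert_lt hsum N j⟩ (by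
        show 1 ≤ ell h a _
        simp only [he]
        omega)
      simp only [he, Nat.add_sub_cancel] at hb
      have h2 := csum_succ a (N : ℕ)
      omega⟩, by
    intro j j' hjj
    rw [Fin.le_def] at hjj ⊢
    simp only [Fin.val_mk]
    have he := vert_ell hpos hsum N j
    have he' := vert_ell hpos hsum N j'
    have h3 := hm.2.2 ⟨csum a ((N : ℕ) + 1) + (j : ℕ), vert_lt hsum N j⟩
      ⟨csum a ((N : ℕ) + 1) + (j' : ℕ), vert_lt hsum N j'⟩ (by simp; omega) (by rw [he, he'])
    omega⟩

lemma pfj_lt (hsum : csum a (h + 1) = n) (v : Fin n) (hv : 1 ≤ ell h a (v : ℕ)) :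
    (v : ℕ) - csum a (ell h a (v : ℕ)) < a (ell h a (v : ℕ) - 1 + 1) := by
  have h1 := lt_csum_ell (h := h) (a := a) hsum v.isLt
  have h2 := csum_ell_le (h := h) (a := a) (v : ℕ)
  have h3 : ell h a (v : ℕ) - 1 + 1 = ell h a (v : ℕ) := by omega
  rw [csum_succ] at h1
  rw [h3]
  omega

lemma pfv_lt (hsum : csum a (h + 1) = n) (v : Fin n) (hv : 1 ≤ ell h a (v : ℕ))
    (x : ℕ) (hx : x < a (ell h a (v : ℕ) - 1)) :
    csum a (ell h a (v : ℕ) - 1) + x < csum a (ell h a (v : ℕ)) := by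
  have h4 := csum_succ a (ell h a (v : ℕ) - 1)
  have h3 : ell h a (v : ℕ) - 1 + 1 = ell h a (v : ℕ) := by omega
  rw [h3] at h4
  omega

lemma pfv_lt_n (hsum : csum a (h + 1) = n) (v : Fin n) (hv : 1 ≤ ell h a (v : ℕ))
    (x : ℕ) (hx : x < a (ell h a (v : ℕ) - 1)) :
    csum a (ell h a (v : ℕ) - 1) + x < n := by
  have h1 := pfv_lt hsum v hv x hx
  have h2 := csum_ell_le (h := h) (a := a) (v : ℕ)
  have := v.isLt
  omega

/-- from a tuple of monotone maps, a good `m` -/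
noncomputable def piToGood (hpos : ∀ N ≤ h, 1 ≤ a N) (hsum : csum a (h + 1) = n)
    (F : (N : Fin h) → {f : Fin (a ((N : ℕ) + 1)) → Fin (a (N : ℕ)) // Monotone f}) :
    Fin n → Fin n := fun v =>
  if hv : 1 ≤ ell h a (v : ℕ) then
    ⟨csum a (ell h a (v : ℕ) - 1) +
      ((F ⟨ell h a (v : ℕ) - 1, by have := ell_le (h := h) (a := a) (v : ℕ); omega⟩).1
        ⟨(v : ℕ) - csum a (ell h a (v : ℕ)), pfj_lt hsum v hv⟩ : ℕ),
      pfv_lt_n hsum v hv _ (Fin.is_lt _)⟩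
  else v

lemma piToGood_good (hpos : ∀ N ≤ h, 1 ≤ a N) (hsum : csum a (h + 1) = n)
    (F : (N : Fin h) → {f : Fin (a ((N : ℕ) + 1)) → Fin (a (N : ℕ)) // Monotone f}) :
    GoodM n h a (piToGood hpos hsum F) := by
  refine ⟨fun v hv => ?_, fun v hv => ?_, fun u v huv hell => ?_⟩
  · simp only [piToGood]
    rw [dif_neg (by omega)]
  · simp only [piToGood]
    rw [dif_pos hv]
    refine ⟨Nat.le_add_right _ _, ?_⟩
    exact pfv_lt hsum v hv _ (Fin.is_lt _)
  · rcases Nat.eq_zero_or_pos (ell h a (v : ℕ)) with h0 | h0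
    · simp only [piToGood]
      rw [dif_neg (by omega), dif_neg (by omega)]
      exact huv
    · simp only [piToGood]
      rw [dif_pos (by omega : 1 ≤ ell h a (u : ℕ)), dif_pos (by omega : 1 ≤ ell h a (v : ℕ))]
      simp only [Fin.val_mk]
      have h5 : csum a (ell h a (u : ℕ)) = csum a (ell h a (v : ℕ)) := by rw [hell]
      have h6 := csum_ell_le (h := h) (a := a) (u : ℕ)
      refine Nat.add_le_add (le_of_eq (by rw [hell])) (F_mono_le F (Fin.ext ?_) _ _ ?_)
      · simp only [Fin.val_mk]
        omega
      · simp only [Fin.val_mk]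
        omega

noncomputable def goodEquiv (hpos : ∀ N ≤ h, 1 ≤ a N) (hsum : csum a (h + 1) = n) :
    {m : Fin n → Fin n // GoodM n h a m} ≃
      ((N : Fin h) → {f : Fin (a ((N : ℕ) + 1)) → Fin (a (N : ℕ)) // Monotone f}) where
  toFun m := goodToPi hpos hsum m.1 m.2
  invFun F := ⟨piToGood hpos hsum F, piToGood_good hpos hsum F⟩
  left_inv := by
    rintro ⟨m, hm⟩
    apply Subtype.ext
    funext v
    rcases Nat.lt_or_ge (ell h a (v : ℕ)) 1 with h0 | hv
    · simp only [piToGood]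
      rw [dif_neg (by omega)]
      exact (hm.1 v (by omega)).symm
    · apply Fin.ext
      simp only [piToGood]
      rw [dif_pos hv]
      simp only [goodToPi, Fin.val_mk]
      have key : ∀ (w : Fin n), (w : ℕ) = (v : ℕ) →
          csum a (ell h a (v : ℕ) - 1) + ((m w : ℕ) - csum a (ell h a (v : ℕ) - 1)) =
            (m v : ℕ) := by
        intro w hw
        have hww : w = v := Fin.ext hw
        subst hww
        have hb := hm.2.1 w hv
        omega
      refine key _ ?_
      simp only [Fin.val_mk]
      have h2 := csum_ell_le (h := h) (a := a) (v : ℕ)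
      have h3 : ell h a (v : ℕ) - 1 + 1 = ell h a (v : ℕ) := by omega
      have hcs : csum a (ell h a (v : ℕ) - 1 + 1) = csum a (ell h a (v : ℕ)) := by rw [h3]
      omega
  right_inv := by
    intro F
    funext N
    apply Subtype.ext
    funext j
    apply Fin.ext
    simp only [goodToPi, Fin.val_mk]
    have hVell : ell h a (csum a ((N : ℕ) + 1) + (j : ℕ)) = (N : ℕ) + 1 := vert_ell hpos hsum N j
    have hc : 1 ≤ ell h a (csum a ((N : ℕ) + 1) + (j : ℕ)) := by omega
    simp only [piToGood, Fin.val_mk]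
    rw [dif_pos hc]
    simp only [Fin.val_mk]
    have key : ∀ (N' : Fin h) (j' : Fin (a ((N' : ℕ) + 1))), (N' : ℕ) = (N : ℕ) →
        (j' : ℕ) = (j : ℕ) →
        csum a (ell h a (csum a ((N : ℕ) + 1) + (j : ℕ)) - 1) +
            (((F N').1 j') : ℕ) - csum a (N : ℕ) = (((F N).1 j) : ℕ) := by
      intro N' j' hN hj
      have h1 := F_congr F (Fin.ext hN) j' j hj
      have hcs : csum a (ell h a (csum a ((N : ℕ) + 1) + (j : ℕ)) - 1) = csum a (N : ℕ) := by
        rw [hVell, Nat.add_sub_cancel]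
      omega
    refine key _ _ ?_ ?_
    · simp only [Fin.val_mk]
      omega
    · simp only [Fin.val_mk]
      have hcs2 : csum a (ell h a (csum a ((N : ℕ) + 1) + (j : ℕ))) = csum a ((N : ℕ) + 1) := by
        rw [hVell]
      omega

lemma card_good (hpos : ∀ N ≤ h, 1 ≤ a N) (hsum : csum a (h + 1) = n) :
    Nat.card {m : Fin n → Fin n // GoodM n h a m} =
      ∏ N ∈ Finset.range h, (a (N + 1) + a N - 1).choose (a N - 1) := by
  rw [Nat.card_congr (goodEquiv hpos hsum), Nat.card_pi,
    ← Fin.prod_univ_eq_prod_range (fun N => (a (N + 1) + a N - 1).choose (a N - 1)) h]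
  exact Finset.prod_congr rfl fun N _ =>
    card_monotone_maps (a ((N : ℕ) + 1)) (a (N : ℕ)) (hpos (N : ℕ) (le_of_lt N.isLt))

end Counting

end CCG

theorem count_closed_graphs_with_layers (n h : ℕ) (hn : 0 < n) (a : ℕ → ℕ)
    (ha0 : a 0 = 1) (hpos : ∀ N ≤ h, 1 ≤ a N)
    (hsum : ∑ N ∈ Finset.range (h + 1), a N = n) :
    {G : SimpleGraph (Fin n) |
        G.Connected ∧ IsClosedLabeling G ∧
        ∀ N ≤ h, {v : Fin n | G.dist ⟨0, hn⟩ v = N} =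
          {v : Fin n | ∑ M ∈ Finset.range N, a M ≤ (v : ℕ) ∧
            (v : ℕ) < ∑ M ∈ Finset.range (N + 1), a M}}.ncard =
      ∏ N ∈ Finset.range h, Nat.choose (a (N + 1) + a N - 1) (a N - 1) := by
  classical
  have hsum' : CCG.csum a (h + 1) = n := hsum
  have hinj : Set.InjOn (fun m : Fin n → Fin n => CCG.layerGraph h a m)
      {m | CCG.GoodM n h a m} := by
    intro m hm m' hm' heq
    simp only [Set.mem_setOf_eq] at hm hm'
    simp only at heq
    have key : ∀ (m₁ m₂ : Fin n → Fin n), CCG.GoodM n h a m₁ →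
        CCG.layerGraph (n := n) h a m₁ = CCG.layerGraph h a m₂ →
        ∀ v : Fin n, 1 ≤ CCG.ell h a (v : ℕ) → (m₂ v : ℕ) ≤ (m₁ v : ℕ) := by
      intro m₁ m₂ hm₁ heq v hv
      have hb := hm₁.2.1 v hv
      have hL := CCG.ell_le (h := h) (a := a) (v : ℕ)
      have h2 := CCG.csum_ell_le (h := h) (a := a) (v : ℕ)
      have h3 : CCG.ell h a (v : ℕ) - 1 + 1 = CCG.ell h a (v : ℕ) := by omega
      have hellm : CCG.ell h a ((m₁ v : ℕ)) = CCG.ell h a (v : ℕ) - 1 := by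
        rw [CCG.ell_eq_iff hpos hsum' (by omega) (m₁ v).isLt, h3]
        exact hb
      have hadj : (CCG.layerGraph (n := n) h a m₁).Adj (m₁ v) v := by
        refine ⟨?_, Or.inr (Or.inl ⟨by omega, le_rfl⟩)⟩
        intro hc
        have hcc : ((m₁ v : Fin n) : ℕ) = (v : ℕ) := by rw [hc]
        omega
      rw [heq] at hadj
      obtain ⟨hne, hc⟩ := hadj
      rcases hc with h1 | ⟨h1, h1'⟩ | ⟨h1, h1'⟩
      · omega
      · exact h1'
      · omega
    funext v
    rcases Nat.lt_or_ge (CCG.ell h a (v : ℕ)) 1 with h0 | hv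
    · rw [hm.1 v (by omega), hm'.1 v (by omega)]
    · exact Fin.ext (le_antisymm (key m' m hm' heq.symm v hv) (key m m' hm heq v hv))
  have hSeq : {G : SimpleGraph (Fin n) |
        G.Connected ∧ IsClosedLabeling G ∧
        ∀ N ≤ h, {v : Fin n | G.dist ⟨0, hn⟩ v = N} =
          {v : Fin n | ∑ M ∈ Finset.range N, a M ≤ (v : ℕ) ∧
            (v : ℕ) < ∑ M ∈ Finset.range (N + 1), a M}} =
      (fun m : Fin n → Fin n => CCG.layerGraph h a m) '' {m | CCG.GoodM n h a m} := by
    ext G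
    simp only [Set.mem_setOf_eq, Set.mem_image]
    constructor
    · rintro ⟨hconn, hclosed, hlayer⟩
      have hdist : ∀ v : Fin n, G.dist ⟨0, hn⟩ v = CCG.ell h a (v : ℕ) := by
        intro v
        have hN := CCG.ell_le (h := h) (a := a) (v : ℕ)
        exact (Set.ext_iff.mp (hlayer (CCG.ell h a (v : ℕ)) hN) v).mpr
          ⟨CCG.csum_ell_le (v : ℕ), CCG.lt_csum_ell hsum' v.isLt⟩
      obtain ⟨m, hm, hGm⟩ := CCG.forward_exists hn ha0 hpos hsum' hconn hdist hclosed
      exact ⟨m, hm, hGm⟩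
    · rintro ⟨m, hm, rfl⟩
      refine ⟨CCG.layerGraph_connected hn ha0 hpos hsum' hm,
        CCG.layerGraph_closed hn ha0 hpos hsum' hm, fun N hN => ?_⟩
      ext v
      simp only [Set.mem_setOf_eq]
      rw [CCG.layerGraph_dist hn ha0 hpos hsum' hm v]
      exact CCG.ell_eq_iff hpos hsum' hN v.isLt
  rw [hSeq, Set.ncard_image_of_injOn hinj, ← Nat.card_coe_set_eq]
  exact CCG.card_good hpos hsum'
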